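/- arXiv:1104.3892 — 3 statements merged into one kernel-verified Lean document; each statement's English description precedes it below -/
import Mathlib

section
/- Let χ : ℝ → [0,1] be a cutoff function with parameter a ∈ (0,1] and let ρ ∈ (0,a). Then for every x ≥ 0 and every n ∈ ℕ one has 1_{{0}}(x) + Σ_{j=n}^∞ ( 1_{[aρ^{j+1},∞)}(x) · χ(x/ρ^j) )² ≥ χ(x/ρ^n)², where the sum (all of whose terms are nonnegative, and all but finitely many of which vanish when x > 0) is taken in [0,∞]. -/
open scoped ENNReal

/-- **Spectral partition inequality** (equation (4) of Hasler–Herbst,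
"Uniqueness of the ground state in the Feshbach renormalization analysis").

Let `χ : ℝ → [0,1]` be a cutoff function with parameter `a ∈ (0,1]`, i.e. a Borel
function that is nonincreasing on `[0,∞)`, equal to `1` on `[0,a]` and to `0` on
`[1,∞)`, and let `ρ ∈ (0,a)`.  Then for every `x ≥ 0` and every `n ∈ ℕ`,

`1_{{0}}(x) + Σ_{j=n}^∞ (1_{[aρ^{j+1},∞)}(x) · χ(x/ρ^j))² ≥ χ(x/ρ^n)²`,

where the sum (reindexed by `j = n + k`, `k ∈ ℕ`) is taken in `[0,∞]`. -/
theorem spectral_partition_inequality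
    (χ : ℝ → ℝ) (a : ℝ)
    (hχ_meas : Measurable χ)
    (hχ_range : ∀ x, χ x ∈ Set.Icc (0 : ℝ) 1)
    (hχ_anti : AntitoneOn χ (Set.Ici (0 : ℝ)))
    (hχ_one : ∀ x ∈ Set.Icc (0 : ℝ) a, χ x = 1)
    (hχ_zero : ∀ x : ℝ, 1 ≤ x → χ x = 0)
    (ha : 0 < a) (ha1 : a ≤ 1)
    (ρ : ℝ) (hρ : 0 < ρ) (hρa : ρ < a)
    (x : ℝ) (hx : 0 ≤ x) (n : ℕ) :
    ENNReal.ofReal (χ (x / ρ ^ n) ^ 2) ≤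
      Set.indicator ({0} : Set ℝ) (fun _ => (1 : ℝ≥0∞)) x +
        ∑' k : ℕ,
          ENNReal.ofReal
            ((Set.indicator (Set.Ici (a * ρ ^ (n + k + 1))) (fun _ => (1 : ℝ)) x *
                χ (x / ρ ^ (n + k))) ^ 2) := by
  have hχ01 : ∀ y : ℝ, ENNReal.ofReal (χ y ^ 2) ≤ 1 := by
    intro y
    rw [ENNReal.ofReal_le_one]
    have h := hχ_range y
    nlinarith [h.1, h.2]
  rcases eq_or_lt_of_le hx with h0 | hpos
  · -- x = 0 : the singleton indicator contributes 1
    have hind : Set.indicator ({0} : Set ℝ) (fun _ => (1 : ℝ≥0∞)) x = 1 := by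
      simp [← h0]
    rw [hind]
    exact le_trans (hχ01 _) le_self_add
  · -- x > 0
    have hρ1 : ρ < 1 := lt_of_lt_of_le hρa ha1
    have hex : ∃ k : ℕ, a * ρ ^ (n + k + 1) ≤ x := by
      obtain ⟨m, hm⟩ := exists_pow_lt_of_lt_one (div_pos hpos ha) hρ1
      refine ⟨m, ?_⟩
      have h1 : ρ ^ (n + m + 1) ≤ ρ ^ m :=
        pow_le_pow_of_le_one hρ.le hρ1.le (by omega)
      have h2 : a * ρ ^ m < x := by
        have := (lt_div_iff₀ ha).mp hm
        linarith
      nlinarith [mul_le_mul_of_nonneg_left h1 ha.le]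
    set k := Nat.find hex with hk
    have hk1 : a * ρ ^ (n + k + 1) ≤ x := Nat.find_spec hex
    have hterm : ENNReal.ofReal (χ (x / ρ ^ n) ^ 2) ≤
        ENNReal.ofReal
          ((Set.indicator (Set.Ici (a * ρ ^ (n + k + 1))) (fun _ => (1 : ℝ)) x *
              χ (x / ρ ^ (n + k))) ^ 2) := by
      have hindk : Set.indicator (Set.Ici (a * ρ ^ (n + k + 1))) (fun _ => (1 : ℝ)) x = 1 :=
        Set.indicator_of_mem hk1 _
      rw [hindk, one_mul]
      rcases Nat.eq_zero_or_pos k with hk0 | hkpos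
      · simp [hk0]
      · -- k ≥ 1 : minimality gives x < a * ρ ^ (n + k), so χ (x / ρ^(n+k)) = 1
        have hlt : ¬ a * ρ ^ (n + (k - 1) + 1) ≤ x := Nat.find_min hex (by omega)
        have hlt' : x < a * ρ ^ (n + k) := by
          push_neg at hlt
          have : n + (k - 1) + 1 = n + k := by omega
          rwa [this] at hlt
        have hχk : χ (x / ρ ^ (n + k)) = 1 := by
          apply hχ_one
          constructor
          · positivity
          · rw [div_le_iff₀ (by positivity)]
            linarith [hlt'.le]
        rw [hχk]
        simpa using hχ01 (x / ρ ^ n)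
    calc ENNReal.ofReal (χ (x / ρ ^ n) ^ 2) ≤
        ∑' k : ℕ,
          ENNReal.ofReal
            ((Set.indicator (Set.Ici (a * ρ ^ (n + k + 1))) (fun _ => (1 : ℝ)) x *
                χ (x / ρ ^ (n + k))) ^ 2) := le_trans hterm (ENNReal.le_tsum k)
      _ ≤ _ := le_add_self
end

section
/- Let (X,μ) be a measure space, f : X → [0,∞) a measurable function, χ : ℝ → [0,1] a cutoff function with parameter a ∈ (0,1], and ρ ∈ (0,a). Let ψ ∈ L²(μ;ℂ) satisfy ψ = 0 μ-almost everywhere on the set f⁻¹({0}). Then for every n ∈ ℕ, (aρ)² · ∫ χ(f(x)/ρ^n)² |ψ(x)|² dμ(x) ≤ Σ_{j=n}^∞ ρ^{-2j} ∫ f(x)² χ(f(x)/ρ^j)² |ψ(x)|² dμ(x), where both sides are taken in [0,∞]. -/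
open MeasureTheory
open scoped ENNReal

private lemma key_pointwise (χ : ℝ → ℝ) (a ρ : ℝ)
    (hχ_range : ∀ x, χ x ∈ Set.Icc (0 : ℝ) 1)
    (hχ_one : ∀ x ∈ Set.Icc (0 : ℝ) a, χ x = 1)
    (ha : 0 < a) (ha1 : a ≤ 1) (hρ : 0 < ρ) (hρa : ρ < a)
    (n : ℕ) (t w : ℝ) (ht : 0 ≤ t) (hw : 0 ≤ w) (htw : t = 0 → w = 0) :
    ∃ k : ℕ, (a * ρ) ^ 2 * (χ (t / ρ ^ n) ^ 2 * w) ≤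
      (ρ ^ (2 * (n + k)))⁻¹ * (t ^ 2 * χ (t / ρ ^ (n + k)) ^ 2 * w) := by
  have hρ1 : ρ < 1 := lt_of_lt_of_le hρa ha1
  by_cases ht0 : t = 0
  · exact ⟨0, by simp [htw ht0]⟩
  have htpos : 0 < t := lt_of_le_of_ne ht (Ne.symm ht0)
  have hχn0 : 0 ≤ χ (t / ρ ^ n) := (hχ_range _).1
  have hχn1 : χ (t / ρ ^ n) ≤ 1 := (hχ_range _).2
  by_cases h1 : a * ρ ^ n < t
  · refine ⟨0, ?_⟩
    have hpow : (0:ℝ) < ρ ^ n := pow_pos hρ n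
    have h2 : a ^ 2 * (ρ ^ n) ^ 2 < t ^ 2 := by
      have := mul_lt_mul'' h1 h1 (by positivity) (by positivity)
      nlinarith
    have hinv : (0:ℝ) < (ρ ^ (2 * (n + 0)))⁻¹ := by positivity
    have hcancel : (ρ ^ (2 * (n + 0)))⁻¹ * (ρ ^ n) ^ 2 = 1 := by
      rw [← pow_mul]
      field_simp
      ring
    have hkey : (a * ρ) ^ 2 ≤ (ρ ^ (2 * (n + 0)))⁻¹ * t ^ 2 := by
      have h3 : (ρ ^ (2 * (n + 0)))⁻¹ * (a ^ 2 * (ρ ^ n) ^ 2) ≤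
          (ρ ^ (2 * (n + 0)))⁻¹ * t ^ 2 := by nlinarith
      have hρ2 : ρ ^ 2 ≤ 1 := by nlinarith
      calc (a * ρ) ^ 2 ≤ a ^ 2 := by nlinarith [sq_nonneg a]
        _ = (ρ ^ (2 * (n + 0)))⁻¹ * (a ^ 2 * (ρ ^ n) ^ 2) := by
            rw [show (ρ ^ (2 * (n + 0)))⁻¹ * (a ^ 2 * (ρ ^ n) ^ 2)
              = a ^ 2 * ((ρ ^ (2 * (n + 0)))⁻¹ * (ρ ^ n) ^ 2) by ring, hcancel, mul_one]
        _ ≤ (ρ ^ (2 * (n + 0)))⁻¹ * t ^ 2 := h3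
    have hχw : 0 ≤ χ (t / ρ ^ n) ^ 2 * w := by positivity
    calc (a * ρ) ^ 2 * (χ (t / ρ ^ n) ^ 2 * w)
        ≤ ((ρ ^ (2 * (n + 0)))⁻¹ * t ^ 2) * (χ (t / ρ ^ n) ^ 2 * w) :=
          mul_le_mul_of_nonneg_right hkey hχw
      _ = (ρ ^ (2 * (n + 0)))⁻¹ * (t ^ 2 * χ (t / ρ ^ (n + 0)) ^ 2 * w) := by ring
  · push_neg at h1
    -- t ≤ a * ρ ^ n; find k with a * ρ ^ (n+k+1) < t ≤ a * ρ ^ (n+k)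
    have hex : ∃ k : ℕ, a * ρ ^ (n + k + 1) < t := by
      obtain ⟨m, hm⟩ := exists_pow_lt_of_lt_one (div_pos htpos ha) hρ1
      refine ⟨m, ?_⟩
      have h2 : ρ ^ (n + m + 1) ≤ ρ ^ m :=
        pow_le_pow_of_le_one hρ.le hρ1.le (by omega)
      have h3 : ρ ^ (n + m + 1) < t / a := lt_of_le_of_lt h2 hm
      have := (lt_div_iff₀ ha).mp h3
      linarith
    classical
    set k := Nat.find hex with hk
    have hklt : a * ρ ^ (n + k + 1) < t := Nat.find_spec hex
    have hkle : t ≤ a * ρ ^ (n + k) := by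
      rcases Nat.eq_zero_or_pos k with h0 | hpos
      · rw [h0]; simpa using h1
      · have := Nat.find_min hex (m := k - 1) (by omega)
        push_neg at this
        have : t ≤ a * ρ ^ (n + (k - 1) + 1) := this
        have heq : n + (k - 1) + 1 = n + k := by omega
        rwa [heq] at this
    have hpow : (0:ℝ) < ρ ^ (n + k) := pow_pos hρ _
    have hχ1 : χ (t / ρ ^ (n + k)) = 1 := by
      apply hχ_one
      constructor
      · positivity
      · rw [div_le_iff₀ hpow]; linarith [hkle]
    refine ⟨k, ?_⟩
    rw [hχ1]
    have hinvpos : (0:ℝ) < (ρ ^ (2 * (n + k)))⁻¹ := by positivity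
    have hcancel : (ρ ^ (2 * (n + k)))⁻¹ * (ρ ^ (n + k)) ^ 2 = 1 := by
      rw [← pow_mul]
      field_simp
      ring
    have ht2 : a ^ 2 * ρ ^ 2 * (ρ ^ (n + k)) ^ 2 < t ^ 2 := by
      have h3 : ρ ^ (n + k + 1) = ρ ^ (n + k) * ρ := by ring
      have h4 : 0 < a * ρ ^ (n + k + 1) := by positivity
      have h5 := mul_lt_mul'' hklt hklt h4.le h4.le
      have h6 : a * ρ ^ (n + k + 1) * (a * ρ ^ (n + k + 1))
          = a ^ 2 * ρ ^ 2 * (ρ ^ (n + k)) ^ 2 := by rw [h3]; ring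
      nlinarith
    have hkey : (a * ρ) ^ 2 ≤ (ρ ^ (2 * (n + k)))⁻¹ * t ^ 2 := by
      have h3 : (ρ ^ (2 * (n + k)))⁻¹ * (a ^ 2 * ρ ^ 2 * (ρ ^ (n + k)) ^ 2) ≤
          (ρ ^ (2 * (n + k)))⁻¹ * t ^ 2 := by nlinarith
      calc (a * ρ) ^ 2
          = a ^ 2 * ρ ^ 2 * ((ρ ^ (2 * (n + k)))⁻¹ * (ρ ^ (n + k)) ^ 2) := by
            rw [hcancel]; ring
        _ = (ρ ^ (2 * (n + k)))⁻¹ * (a ^ 2 * ρ ^ 2 * (ρ ^ (n + k)) ^ 2) := by ring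
        _ ≤ (ρ ^ (2 * (n + k)))⁻¹ * t ^ 2 := h3
    have hχn2 : χ (t / ρ ^ n) ^ 2 ≤ 1 := by nlinarith
    calc (a * ρ) ^ 2 * (χ (t / ρ ^ n) ^ 2 * w)
        ≤ (a * ρ) ^ 2 * (1 * w) := by
          apply mul_le_mul_of_nonneg_left _ (by positivity)
          apply mul_le_mul_of_nonneg_right hχn2 hw
      _ ≤ ((ρ ^ (2 * (n + k)))⁻¹ * t ^ 2) * (1 * w) := by
          apply mul_le_mul_of_nonneg_right hkey (by positivity)
      _ = (ρ ^ (2 * (n + k)))⁻¹ * (t ^ 2 * 1 ^ 2 * w) := by ring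

/-- **Inequality (5) (ineq:T_01)** of Hasler–Herbst, "Uniqueness of the ground state
in the Feshbach renormalization analysis", in the multiplication-operator
realization of the self-adjoint operator `T₀` as multiplication by a measurable
function `f ≥ 0` on `L²(μ)`.

Let `χ : ℝ → [0,1]` be a cutoff function with parameter `a ∈ (0,1]` (a Borel
function, nonincreasing on `[0,∞)`, equal to `1` on `[0,a]` and to `0` on
`[1,∞)`), let `ρ ∈ (0,a)`, and let `ψ ∈ L²(μ;ℂ)` vanish `μ`-a.e. on `f⁻¹({0})`.
Then for every `n ∈ ℕ`,

`(aρ)² ∫ χ(f(x)/ρⁿ)² |ψ(x)|² dμ ≤ Σ_{j=n}^∞ ρ^{-2j} ∫ f(x)² χ(f(x)/ρ^j)² |ψ(x)|² dμ`,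

both sides taken in `[0,∞]` (the sum is reindexed by `j = n + k`, `k ∈ ℕ`). -/
theorem spectral_cutoff_L2_inequality
    {X : Type*} [MeasurableSpace X] (μ : Measure X)
    (f : X → ℝ) (hf_meas : Measurable f) (hf_nonneg : ∀ x, 0 ≤ f x)
    (χ : ℝ → ℝ) (a : ℝ)
    (hχ_meas : Measurable χ)
    (hχ_range : ∀ x, χ x ∈ Set.Icc (0 : ℝ) 1)
    (hχ_anti : AntitoneOn χ (Set.Ici (0 : ℝ)))
    (hχ_one : ∀ x ∈ Set.Icc (0 : ℝ) a, χ x = 1)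
    (hχ_zero : ∀ x : ℝ, 1 ≤ x → χ x = 0)
    (ha : 0 < a) (ha1 : a ≤ 1)
    (ρ : ℝ) (hρ : 0 < ρ) (hρa : ρ < a)
    (ψ : X → ℂ) (hψ : MemLp ψ 2 μ)
    (hψ_zero : ∀ᵐ x ∂μ, f x = 0 → ψ x = 0)
    (n : ℕ) :
    ENNReal.ofReal ((a * ρ) ^ 2) *
        ∫⁻ x, ENNReal.ofReal (χ (f x / ρ ^ n) ^ 2 * ‖ψ x‖ ^ 2) ∂μ ≤
      ∑' k : ℕ,
        ENNReal.ofReal ((ρ ^ (2 * (n + k)))⁻¹) *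
          ∫⁻ x, ENNReal.ofReal (f x ^ 2 * χ (f x / ρ ^ (n + k)) ^ 2 * ‖ψ x‖ ^ 2) ∂μ := by
  have hψm : AEMeasurable (fun x => ‖ψ x‖) μ := hψ.aestronglyMeasurable.norm.aemeasurable
  -- move constants inside the integrals
  have hLHS : ENNReal.ofReal ((a * ρ) ^ 2) *
      ∫⁻ x, ENNReal.ofReal (χ (f x / ρ ^ n) ^ 2 * ‖ψ x‖ ^ 2) ∂μ =
      ∫⁻ x, ENNReal.ofReal ((a * ρ) ^ 2) *
        ENNReal.ofReal (χ (f x / ρ ^ n) ^ 2 * ‖ψ x‖ ^ 2) ∂μ :=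
    (lintegral_const_mul' _ _ ENNReal.ofReal_ne_top).symm
  have hRHSk : ∀ k : ℕ, ENNReal.ofReal ((ρ ^ (2 * (n + k)))⁻¹) *
      ∫⁻ x, ENNReal.ofReal (f x ^ 2 * χ (f x / ρ ^ (n + k)) ^ 2 * ‖ψ x‖ ^ 2) ∂μ =
      ∫⁻ x, ENNReal.ofReal ((ρ ^ (2 * (n + k)))⁻¹) *
        ENNReal.ofReal (f x ^ 2 * χ (f x / ρ ^ (n + k)) ^ 2 * ‖ψ x‖ ^ 2) ∂μ :=
    fun k => (lintegral_const_mul' _ _ ENNReal.ofReal_ne_top).symm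
  rw [hLHS]
  simp_rw [hRHSk]
  have hmeas : ∀ k : ℕ, AEMeasurable (fun x =>
      ENNReal.ofReal ((ρ ^ (2 * (n + k)))⁻¹) *
        ENNReal.ofReal (f x ^ 2 * χ (f x / ρ ^ (n + k)) ^ 2 * ‖ψ x‖ ^ 2)) μ := by
    intro k
    apply AEMeasurable.const_mul
    apply ENNReal.measurable_ofReal.comp_aemeasurable
    apply AEMeasurable.mul
    · exact ((hf_meas.pow_const 2).mul
        (((hχ_meas.comp (hf_meas.div_const _)).pow_const 2))).aemeasurable
    · exact (hψm.pow_const 2)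
  rw [← lintegral_tsum hmeas]
  refine lintegral_mono_ae ?_
  filter_upwards [hψ_zero] with x hx
  obtain ⟨k₀, hk₀⟩ := key_pointwise χ a ρ hχ_range hχ_one ha ha1 hρ hρa n
    (f x) (‖ψ x‖ ^ 2) (hf_nonneg x) (by positivity)
    (fun h => by simp [hx h])
  calc ENNReal.ofReal ((a * ρ) ^ 2) *
        ENNReal.ofReal (χ (f x / ρ ^ n) ^ 2 * ‖ψ x‖ ^ 2)
      = ENNReal.ofReal ((a * ρ) ^ 2 * (χ (f x / ρ ^ n) ^ 2 * ‖ψ x‖ ^ 2)) :=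
        (ENNReal.ofReal_mul (by positivity)).symm
    _ ≤ ENNReal.ofReal ((ρ ^ (2 * (n + k₀)))⁻¹ *
          (f x ^ 2 * χ (f x / ρ ^ (n + k₀)) ^ 2 * ‖ψ x‖ ^ 2)) :=
        ENNReal.ofReal_le_ofReal hk₀
    _ = ENNReal.ofReal ((ρ ^ (2 * (n + k₀)))⁻¹) *
          ENNReal.ofReal (f x ^ 2 * χ (f x / ρ ^ (n + k₀)) ^ 2 * ‖ψ x‖ ^ 2) :=
        ENNReal.ofReal_mul (by positivity)
    _ ≤ ∑' k, ENNReal.ofReal ((ρ ^ (2 * (n + k)))⁻¹) *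
          ENNReal.ofReal (f x ^ 2 * χ (f x / ρ ^ (n + k)) ^ 2 * ‖ψ x‖ ^ 2) :=
        ENNReal.le_tsum k₀
end

section
/- Let (X,μ) be a measure space, f : X → [0,∞) measurable, and for a bounded Borel function φ : ℝ → ℂ let φ(T₀) denote the bounded operator on L²(μ;ℂ) of multiplication by φ∘f. Let Γ : (0,∞) → U(L²(μ;ℂ)) satisfy Γ_s Γ_u = Γ_{su} for all s,u > 0 and the scaling law Γ_s φ(T₀) Γ_s^{-1} = (x ↦ φ(s·x))(T₀) for every s > 0 and every bounded Borel φ. Let χ : ℝ → [0,1] be a cutoff function with parameter a ∈ (0,1] and let ρ ∈ (0,a). Then for every n ≥ 1, ( Γ_ρ χ_ρ(T₀) )^n = Γ_{ρ^n} χ_{ρ^n}(T₀), where χ_t(T₀) denotes multiplication by χ(f/t). -/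
open MeasureTheory

/-- **Composition law for scale transformations and cutoffs**, used in the proof of the
main abstract theorem of Hasler–Herbst, "Uniqueness of the ground state in the Feshbach
renormalization analysis": `(Γ_ρ χ_ρ(T₀))^n = Γ_{ρⁿ} χ_{ρⁿ}(T₀)`.

Here the self-adjoint operator `T₀` is realized, via the spectral theorem, as
multiplication by a measurable function `f ≥ 0` on `L²(μ;ℂ)`; for a bounded Borel
function `φ : ℝ → ℂ`, `φ(T₀)` is the bounded operator `Mop φ` of multiplication by
`φ∘f`.  The unitaries `Γ_s` (`s > 0`) satisfy the group law `Γ_s Γ_u = Γ_{su}` and the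
scaling law `Γ_s φ(T₀) Γ_s⁻¹ = (x ↦ φ(s·x))(T₀)` for all bounded Borel `φ`.  The
function `χ` is a cutoff function with parameter `a ∈ (0,1]`, and `ρ ∈ (0,a)`. -/
theorem scale_cutoff_composition_law
    {X : Type*} [MeasurableSpace X] (μ : Measure X)
    (f : X → ℝ) (hf_meas : Measurable f) (hf_nonneg : ∀ x, 0 ≤ f x)
    (Mop : (ℝ → ℂ) → (Lp ℂ 2 μ →L[ℂ] Lp ℂ 2 μ))
    (hMop : ∀ φ : ℝ → ℂ, Measurable φ → (∃ C : ℝ, ∀ x, ‖φ x‖ ≤ C) →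
      ∀ ψ : Lp ℂ 2 μ, (Mop φ ψ : X → ℂ) =ᵐ[μ] fun x => φ (f x) * ψ x)
    (Γ : ℝ → (Lp ℂ 2 μ ≃ₗᵢ[ℂ] Lp ℂ 2 μ))
    (hΓ_grp : ∀ s u : ℝ, 0 < s → 0 < u → ∀ ψ : Lp ℂ 2 μ, Γ s (Γ u ψ) = Γ (s * u) ψ)
    (hΓ_scale : ∀ s : ℝ, 0 < s → ∀ φ : ℝ → ℂ, Measurable φ → (∃ C : ℝ, ∀ x, ‖φ x‖ ≤ C) →
      ∀ ψ : Lp ℂ 2 μ, Γ s (Mop φ ((Γ s).symm ψ)) = Mop (fun x => φ (s * x)) ψ)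
    (χ : ℝ → ℝ) (a : ℝ)
    (hχ_meas : Measurable χ)
    (hχ_range : ∀ x, χ x ∈ Set.Icc (0 : ℝ) 1)
    (hχ_anti : AntitoneOn χ (Set.Ici (0 : ℝ)))
    (hχ_one : ∀ x ∈ Set.Icc (0 : ℝ) a, χ x = 1)
    (hχ_zero : ∀ x : ℝ, 1 ≤ x → χ x = 0)
    (ha : 0 < a) (ha1 : a ≤ 1)
    (ρ : ℝ) (hρ : 0 < ρ) (hρa : ρ < a)
    (n : ℕ) (hn : 1 ≤ n) (ψ : Lp ℂ 2 μ) :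
    (fun v => Γ ρ (Mop (fun x => (χ (x / ρ) : ℂ)) v))^[n] ψ =
      Γ (ρ ^ n) (Mop (fun x => (χ (x / ρ ^ n) : ℂ)) ψ) := by

  -- basic facts about the functions χ_t
  have hmeas : ∀ t : ℝ, Measurable (fun x => (χ (x / t) : ℂ)) := fun t =>
    Complex.measurable_ofReal.comp (hχ_meas.comp (measurable_id.div_const t))
  have hbdd : ∀ t : ℝ, ∃ C : ℝ, ∀ x, ‖(χ (x / t) : ℂ)‖ ≤ C := by
    intro t
    refine ⟨1, fun x => ?_⟩
    rw [Complex.norm_real, Real.norm_eq_abs, abs_le]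
    exact ⟨by linarith [(hχ_range (x/t)).1], (hχ_range _).2⟩
  induction n with
  | zero => omega
  | succ m ih =>
    rcases Nat.eq_or_lt_of_le hn with h1 | h1
    · -- base case m = 0
      have hm : m = 0 := by omega
      subst hm
      simp [pow_one]
    · have hm : 1 ≤ m := by omega
      have hρm : (0:ℝ) < ρ ^ m := pow_pos hρ m
      rw [Function.iterate_succ_apply', ih hm]
      -- key multiplication identity: χ_{ρ^{m+1}} ∘ f · χ_{ρ^m} ∘ f = χ_{ρ^{m+1}} ∘ f
      have hmul : Mop (fun x => (χ (x / ρ ^ (m+1)) : ℂ))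
            (Mop (fun x => (χ (x / ρ ^ m) : ℂ)) ψ)
          = Mop (fun x => (χ (x / ρ ^ (m+1)) : ℂ)) ψ := by
        apply Lp.ext (p := 2) (μ := μ)
        have h1 := hMop _ (hmeas (ρ ^ (m+1))) (hbdd _)
          (Mop (fun x => (χ (x / ρ ^ m) : ℂ)) ψ)
        have h2 := hMop _ (hmeas (ρ ^ m)) (hbdd _) ψ
        have h3 := hMop _ (hmeas (ρ ^ (m+1))) (hbdd _) ψ
        filter_upwards [h1, h2, h3] with x e1 e2 e3
        rw [e1, e2, e3]
        have key : (χ (f x / ρ ^ (m+1)) : ℂ) * (χ (f x / ρ ^ m) : ℂ)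
            = (χ (f x / ρ ^ (m+1)) : ℂ) := by
          by_cases hz : χ (f x / ρ ^ (m+1)) = 0
          · rw [hz]; simp
          · have hlt : f x / ρ ^ (m+1) < 1 := by
              by_contra hge
              exact hz (hχ_zero _ (le_of_not_gt hge))
            have hρm1 : (0:ℝ) < ρ ^ (m+1) := pow_pos hρ _
            have hfx : f x < ρ ^ (m+1) := by
              rwa [div_lt_one hρm1] at hlt
            have h4 : f x / ρ ^ m < ρ := by
              rw [div_lt_iff₀ hρm]
              calc f x < ρ ^ (m+1) := hfx
                _ = ρ * ρ ^ m := by ring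
            have h5 : χ (f x / ρ ^ m) = 1 :=
              hχ_one _ ⟨div_nonneg (hf_nonneg x) hρm.le, by linarith⟩
            rw [h5, Complex.ofReal_one, mul_one]
        rw [← mul_assoc, key]
      -- scaling step: Mop χ_ρ (Γ_{ρ^m} w) = Γ_{ρ^m} (Mop χ_{ρ^{m+1}} w)
      set w := Mop (fun x => (χ (x / ρ ^ m) : ℂ)) ψ with hw
      have hscale := hΓ_scale (ρ ^ m) hρm (fun x => (χ (x / ρ ^ (m+1)) : ℂ))
        (hmeas _) (hbdd _) (Γ (ρ ^ m) w)
      rw [(Γ (ρ ^ m)).symm_apply_apply] at hscale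
      have hfun : (fun x => (χ ((ρ ^ m * x) / ρ ^ (m+1)) : ℂ))
          = fun x => (χ (x / ρ) : ℂ) := by
        funext x
        congr 2
        rw [pow_succ, mul_div_mul_left _ _ (ne_of_gt hρm)]
      rw [hfun] at hscale
      rw [← hscale, hΓ_grp ρ (ρ ^ m) hρ hρm, hw, hmul, ← pow_succ']
end
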